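/- arXiv:2001.02818 — 2 statements merged into one kernel-verified Lean document; each statement's English description precedes it below -/
import Mathlib

section
/- Quantum Vernam cipher with a Pauli channel error: for every integer d ≥ 2, all integers j, k, and every vector |ψ⟩ ∈ ℂ^d, applying Alice's encoding (c-Z)_{A₂A}(c-X)_{A₁A}, then the Pauli error (X^j Z^k)_A on the message register, then Bob's decoding (c-X^{−1})_{B₁A}(c-Z^{−1})_{B₂A}, to the state |φ⟩_{A₁B₁} ⊗ |φ⟩_{A₂B₂} ⊗ |ψ⟩_A yields the state |φ^{0,k}⟩_{A₁B₁} ⊗ |φ^{0,−j}⟩_{A₂B₂} ⊗ X^j Z^k |ψ⟩_A. In particular, for j = k = 0 (no error) Bob recovers |ψ⟩ and both maximally entangled states remain intact. -/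
open Matrix

noncomputable def ω (d : ℕ) : ℂ := Complex.exp (2 * Real.pi * Complex.I / d)

/-- The generalized Pauli `X` on `ℂ^d`: `X |k⟩ = |k+1 mod d⟩`. -/
def Xmat (d : ℕ) [NeZero d] : Matrix (ZMod d) (ZMod d) ℂ :=
  Matrix.of fun i k => if i = k + 1 then 1 else 0

def XmatInv (d : ℕ) [NeZero d] : Matrix (ZMod d) (ZMod d) ℂ :=
  Matrix.of fun i k => if k = i + 1 then 1 else 0

lemma Xmat_mul_XmatInv (d : ℕ) [NeZero d] : Xmat d * XmatInv d = 1 := by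
  ext i k
  rw [Matrix.mul_apply, Finset.sum_eq_single (i - 1)]
  · simp only [Xmat, XmatInv, Matrix.of_apply, sub_add_cancel, Matrix.one_apply]
    simp [eq_comm]
  · intro c _ hc
    have h : i ≠ c + 1 := fun h => hc (by rw [h, add_sub_cancel_right])
    simp [Xmat, Matrix.of_apply, h]
  · intro h; exact absurd (Finset.mem_univ _) h

/-- `X` as a unit (invertible matrix), so that integer powers `X ^ (j : ℤ)` make sense. -/
noncomputable def XU (d : ℕ) [NeZero d] : (Matrix (ZMod d) (ZMod d) ℂ)ˣ :=
  ⟨Xmat d, XmatInv d, Xmat_mul_XmatInv d, mul_eq_one_comm.mp (Xmat_mul_XmatInv d)⟩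

/-- The generalized Pauli `Z` on `ℂ^d`: `Z |k⟩ = ω^k |k⟩`. -/
noncomputable def Zmat (d : ℕ) [NeZero d] : Matrix (ZMod d) (ZMod d) ℂ :=
  Matrix.diagonal fun i => ω d ^ i.val

lemma omega_ne_zero (d : ℕ) : ω d ≠ 0 := Complex.exp_ne_zero _

/-- `Z` as a unit (invertible matrix). -/
noncomputable def ZU (d : ℕ) [NeZero d] : (Matrix (ZMod d) (ZMod d) ℂ)ˣ :=
  ⟨Zmat d, Matrix.diagonal fun i => (ω d ^ i.val)⁻¹,
   by
    rw [Zmat, Matrix.diagonal_mul_diagonal]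
    have h : (fun i : ZMod d => ω d ^ i.val * (ω d ^ i.val)⁻¹) = fun _ => (1 : ℂ) := by
      funext i
      exact mul_inv_cancel₀ (pow_ne_zero _ (omega_ne_zero d))
    rw [h, Matrix.diagonal_one],
   by
    rw [Zmat, Matrix.diagonal_mul_diagonal]
    have h : (fun i : ZMod d => (ω d ^ i.val)⁻¹ * ω d ^ i.val) = fun _ => (1 : ℂ) := by
      funext i
      exact inv_mul_cancel₀ (pow_ne_zero _ (omega_ne_zero d))
    rw [h, Matrix.diagonal_one]⟩

/-- Integer power `X^j` of the generalized Pauli `X`. -/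
noncomputable def Xpow (d : ℕ) [NeZero d] (j : ℤ) : Matrix (ZMod d) (ZMod d) ℂ := ↑(XU d ^ j)

/-- Integer power `Z^k` of the generalized Pauli `Z`. -/
noncomputable def Zpow (d : ℕ) [NeZero d] (k : ℤ) : Matrix (ZMod d) (ZMod d) ℂ := ↑(ZU d ^ k)

/-- The maximally entangled state `|φ⟩ = (1/√d) ∑ i, |i⟩⊗|i⟩` on `ℂ^d ⊗ ℂ^d`. -/
noncomputable def phi (d : ℕ) [NeZero d] : ZMod d × ZMod d → ℂ :=
  (1 / (Real.sqrt d : ℂ)) •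
    ∑ i : ZMod d, fun p : ZMod d × ZMod d =>
      (if p.1 = i then (1 : ℂ) else 0) * (if p.2 = i then 1 else 0)

/-- The Bell state `|φ^{j,k}⟩ = (X^j Z^k ⊗ I)|φ⟩` (exponents mod `d`). -/
noncomputable def bell (d : ℕ) [NeZero d] (j k : ℤ) : ZMod d × ZMod d → ℂ :=
  Matrix.mulVec
    (Matrix.kroneckerMap (· * ·) (Xpow d j * Zpow d k) (1 : Matrix (ZMod d) (ZMod d) ℂ))
    (phi d)

/-- Embed a two-qudit gate `G` into a multi-register system, acting on registers `r` (first
tensor factor of `G`) and `s` (second tensor factor of `G`), identity elsewhere. -/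
def gate2 {ι : Type*} [Fintype ι] [DecidableEq ι] (d : ℕ) [NeZero d]
    (G : Matrix (ZMod d × ZMod d) (ZMod d × ZMod d) ℂ) (r s : ι) :
    Matrix (ι → ZMod d) (ι → ZMod d) ℂ :=
  Matrix.of fun p q =>
    if ∀ t, t ≠ r → t ≠ s → p t = q t then G (p r, p s) (q r, q s) else 0

/-- Embed a single-qudit gate `M` into a multi-register system, acting on register `r`. -/
def gate1 {ι : Type*} [Fintype ι] [DecidableEq ι] (d : ℕ) [NeZero d]
    (M : Matrix (ZMod d) (ZMod d) ℂ) (r : ι) :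
    Matrix (ι → ZMod d) (ι → ZMod d) ℂ :=
  Matrix.of fun p q => if ∀ t, t ≠ r → p t = q t then M (p r) (q r) else 0

/-- The controlled gate `c-U` on `ℂ^d ⊗ ℂ^d`: `(c-U)|j⟩|k⟩ = |j⟩ ⊗ U^j |k⟩`, the first factor
being the control register. -/
noncomputable def ctrl (d : ℕ) [NeZero d] (U : (Matrix (ZMod d) (ZMod d) ℂ)ˣ) :
    Matrix (ZMod d × ZMod d) (ZMod d × ZMod d) ℂ :=
  Matrix.of fun p q =>
    if p.1 = q.1 then ((U ^ q.1.val : (Matrix (ZMod d) (ZMod d) ℂ)ˣ) : Matrix (ZMod d) (ZMod d) ℂ) p.2 q.2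
    else 0

section helpers
variable (d : ℕ) [NeZero d]

lemma omega_pow_d : ω d ^ d = 1 := by
  have hd : (d : ℂ) ≠ 0 := Nat.cast_ne_zero.mpr (NeZero.ne d)
  rw [ω, ← Complex.exp_nat_mul]
  rw [show (d : ℂ) * (2 * Real.pi * Complex.I / d) = 2 * Real.pi * Complex.I by field_simp]
  exact Complex.exp_two_pi_mul_I

lemma omega_zpow_congr {a b : ℤ} (h : (d : ℤ) ∣ a - b) : ω d ^ a = ω d ^ b := by
  obtain ⟨t, ht⟩ := h
  have ha : a = b + d * t := by linarith
  rw [ha, zpow_add₀ (omega_ne_zero d), _root_.zpow_mul, zpow_natCast, omega_pow_d, _root_.one_zpow, mul_one]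

lemma val_congr (i k : ZMod d) (n : ℤ) (h : i = k + (n : ZMod d)) :
    (d : ℤ) ∣ ((i.val : ℤ) - (n + (k.val : ℤ))) := by
  rw [← ZMod.intCast_zmod_eq_zero_iff_dvd]
  push_cast
  simp only [ZMod.natCast_val, ZMod.cast_id]
  rw [h]; ring

end helpers
section helpers2
variable (d : ℕ) [NeZero d]

lemma Xpow_apply (n : ℤ) :
    Xpow d n = Matrix.of fun i k => if i = k + (n : ZMod d) then 1 else 0 := by
  induction n using Int.induction_on with
  | zero =>
      ext i k
      simp [Xpow, Matrix.one_apply]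
  | succ n ih =>
      have h : Xpow d ((n : ℤ) + 1) = Xpow d n * Xmat d := by
        rw [Xpow, Xpow, _root_.zpow_add_one, Units.val_mul]; rfl
      ext i k
      rw [h, ih, Matrix.mul_apply, Finset.sum_eq_single (k + 1)]
      · rw [show Xmat d (k+1) k = 1 from by simp [Xmat], mul_one]
        show (if i = k + 1 + ((n : ℤ) : ZMod d) then (1:ℂ) else 0) = _
        rw [show k + 1 + ((n : ℤ) : ZMod d) = k + (((n : ℤ) + 1 : ℤ) : ZMod d) from by
          push_cast; ring]
        rfl
      · intro c _ hc
        rw [show Xmat d c k = 0 from by simp [Xmat, hc], mul_zero]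
      · intro h; exact absurd (Finset.mem_univ _) h
  | pred n ih =>
      have h : Xpow d (-(n : ℤ) - 1) = Xpow d (-n) * XmatInv d := by
        rw [Xpow, Xpow, _root_.zpow_sub_one, Units.val_mul]; rfl
      ext i k
      rw [h, ih, Matrix.mul_apply, Finset.sum_eq_single (k - 1)]
      · rw [show XmatInv d (k-1) k = 1 from by simp [XmatInv], mul_one]
        show (if i = k - 1 + ((-(n : ℤ) : ℤ) : ZMod d) then (1:ℂ) else 0) = _
        rw [show k - 1 + ((-(n : ℤ) : ℤ) : ZMod d) = k + (((-(n : ℤ) - 1) : ℤ) : ZMod d) from by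
          push_cast; ring]
        rfl
      · intro c _ hc
        have h2 : k ≠ c + 1 := fun h2 => hc (by rw [h2, add_sub_cancel_right])
        rw [show XmatInv d c k = 0 from by simp [XmatInv, h2], mul_zero]
      · intro h; exact absurd (Finset.mem_univ _) h

lemma Zpow_apply (m : ℤ) :
    Zpow d m = Matrix.diagonal fun i => ω d ^ (m * (i.val : ℤ)) := by
  induction m using Int.induction_on with
  | zero =>
      simp [Zpow]
  | succ n ih =>
      have h : Zpow d ((n : ℤ) + 1) = Zpow d n * Zmat d := by
        rw [Zpow, Zpow, _root_.zpow_add_one, Units.val_mul]; rfl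
      rw [h, ih, Zmat, Matrix.diagonal_mul_diagonal]
      refine congrArg Matrix.diagonal (funext fun i => ?_)
      rw [← zpow_natCast (ω d) i.val, ← zpow_add₀ (omega_ne_zero d)]
      congr 1; ring
  | pred n ih =>
      have h : Zpow d (-(n : ℤ) - 1) = Zpow d (-n) *
          (((ZU d)⁻¹ : (Matrix (ZMod d) (ZMod d) ℂ)ˣ) : Matrix (ZMod d) (ZMod d) ℂ) := by
        rw [Zpow, Zpow, _root_.zpow_sub_one, Units.val_mul]
      have hinv : (((ZU d)⁻¹ : (Matrix (ZMod d) (ZMod d) ℂ)ˣ) : Matrix (ZMod d) (ZMod d) ℂ) =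
          (Matrix.diagonal fun i => (ω d ^ i.val)⁻¹ : Matrix (ZMod d) (ZMod d) ℂ) := rfl
      rw [h, ih, hinv, Matrix.diagonal_mul_diagonal]
      refine congrArg Matrix.diagonal (funext fun i => ?_)
      rw [← zpow_natCast (ω d) i.val, ← _root_.zpow_neg, ← zpow_add₀ (omega_ne_zero d)]
      congr 1; ring

end helpers2
section helpers3
variable (d : ℕ) [NeZero d]

lemma Xpow_add (a b : ℤ) : Xpow d (a + b) = Xpow d a * Xpow d b := by
  rw [Xpow, Xpow, Xpow, _root_.zpow_add, Units.val_mul]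

lemma Zpow_add (a b : ℤ) : Zpow d (a + b) = Zpow d a * Zpow d b := by
  rw [Zpow, Zpow, Zpow, _root_.zpow_add, Units.val_mul]

lemma Xpow_zero : Xpow d 0 = 1 := by
  rw [Xpow, zpow_zero, Units.val_one]

lemma Zpow_zero : Zpow d 0 = 1 := by
  rw [Zpow, zpow_zero, Units.val_one]

lemma ZX_comm (m n : ℤ) :
    Zpow d m * Xpow d n = ω d ^ (m * n) • (Xpow d n * Zpow d m) := by
  rw [Zpow_apply, Xpow_apply]
  ext i k
  simp only [Matrix.diagonal_mul, Matrix.mul_diagonal, Matrix.smul_apply, Matrix.of_apply,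
    smul_eq_mul]
  by_cases h : i = k + (n : ZMod d)
  · rw [if_pos h, mul_one, one_mul]
    rw [← zpow_add₀ (omega_ne_zero d)]
    refine omega_zpow_congr d ?_
    have := val_congr d i k n h
    have h2 : m * (i.val : ℤ) - (m * n + m * (k.val : ℤ)) = m * ((i.val : ℤ) - (n + (k.val : ℤ))) := by
      ring
    rw [h2]
    exact Dvd.dvd.mul_left this m
  · rw [if_neg h, mul_zero, zero_mul, mul_zero]

lemma key (j k : ℤ) (m n : ℤ) :
    Xpow d (-m) * (Zpow d (-n) * (Xpow d j * Zpow d k * (Zpow d n * Xpow d m))) =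
      ω d ^ (k * m - j * n) • (Xpow d j * Zpow d k) := by
  have h1 : Zpow d k * (Zpow d n * Xpow d m) = ω d ^ ((k + n) * m) • (Xpow d m * Zpow d (k + n)) := by
    rw [← mul_assoc, ← Zpow_add, ZX_comm]
  calc Xpow d (-m) * (Zpow d (-n) * (Xpow d j * Zpow d k * (Zpow d n * Xpow d m)))
      = Xpow d (-m) * (Zpow d (-n) * (Xpow d j * (Zpow d k * (Zpow d n * Xpow d m)))) := by
        rw [mul_assoc (Xpow d j)]
    _ = ω d ^ ((k + n) * m) •
          (Xpow d (-m) * (Zpow d (-n) * (Xpow d j * (Xpow d m * Zpow d (k + n))))) := by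
        rw [h1, mul_smul_comm, mul_smul_comm, mul_smul_comm]
    _ = ω d ^ ((k + n) * m) •
          (Xpow d (-m) * ((Zpow d (-n) * Xpow d (j + m)) * Zpow d (k + n))) := by
        rw [← mul_assoc (Xpow d j), ← Xpow_add, mul_assoc (Zpow d (-n))]
    _ = ω d ^ ((k + n) * m) • (ω d ^ ((-n) * (j + m)) •
          (Xpow d (-m) * ((Xpow d (j + m) * Zpow d (-n)) * Zpow d (k + n)))) := by
        rw [ZX_comm, Matrix.smul_mul, mul_smul_comm]
    _ = ω d ^ ((k + n) * m) • (ω d ^ ((-n) * (j + m)) •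
          ((Xpow d (-m) * Xpow d (j + m)) * (Zpow d (-n) * Zpow d (k + n)))) := by
        rw [mul_assoc (Xpow d (j+m)), ← mul_assoc (Xpow d (-m))]
    _ = ω d ^ ((k + n) * m) • (ω d ^ ((-n) * (j + m)) • (Xpow d j * Zpow d k)) := by
        rw [← Xpow_add, ← Zpow_add]
        norm_num
    _ = ω d ^ (k * m - j * n) • (Xpow d j * Zpow d k) := by
        rw [smul_smul, ← zpow_add₀ (omega_ne_zero d)]
        congr 2
        ring

end helpers3
section helpers4
variable (d : ℕ) [NeZero d]

lemma sum_update {ι : Type*} [Fintype ι] [DecidableEq ι]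
    (p : ι → ZMod d) (r : ι) (f : (ι → ZMod d) → ℂ)
    (h0 : ∀ q : ι → ZMod d, (∃ t, t ≠ r ∧ p t ≠ q t) → f q = 0) :
    ∑ q, f q = ∑ c, f (Function.update p r c) := by
  have hinj : ∀ x ∈ Finset.univ, ∀ y ∈ Finset.univ,
      Function.update p r x = Function.update p r y → x = y := by
    intro a _ b _ hab
    have := congrFun hab r
    simpa using this
  rw [← Finset.sum_image (s := Finset.univ) (g := Function.update p r) (f := f) hinj]
  symm
  apply Finset.sum_subset (Finset.subset_univ _)
  intro q _ hq
  apply h0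
  by_contra hc
  push_neg at hc
  apply hq
  refine Finset.mem_image.mpr ⟨q r, Finset.mem_univ _, ?_⟩
  funext t
  by_cases ht : t = r
  · subst ht; simp
  · rw [Function.update_of_ne ht, hc t ht]

lemma gate1_mulVec {ι : Type*} [Fintype ι] [DecidableEq ι]
    (M : Matrix (ZMod d) (ZMod d) ℂ) (r : ι) (v : (ι → ZMod d) → ℂ) (p : ι → ZMod d) :
    (gate1 d M r).mulVec v p = ∑ c, M (p r) c * v (Function.update p r c) := by
  simp only [Matrix.mulVec, dotProduct]
  rw [sum_update d p r _ ?_]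
  · refine Finset.sum_congr rfl fun c _ => ?_
    have hcond : ∀ t, t ≠ r → p t = Function.update p r c t := fun t ht =>
      (Function.update_of_ne ht c p).symm
    simp only [gate1, Matrix.of_apply, if_pos hcond, Function.update_self]
  · rintro q ⟨t, htr, hpt⟩
    simp only [gate1, Matrix.of_apply]
    rw [if_neg, zero_mul]
    push_neg
    exact ⟨t, htr, hpt⟩

lemma gate2_ctrl_mulVec {ι : Type*} [Fintype ι] [DecidableEq ι]
    (U : (Matrix (ZMod d) (ZMod d) ℂ)ˣ) (r s : ι) (hrs : r ≠ s)
    (v : (ι → ZMod d) → ℂ) (p : ι → ZMod d) :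
    (gate2 d (ctrl d U) r s).mulVec v p =
      ∑ c, ((U ^ (p r).val : (Matrix (ZMod d) (ZMod d) ℂ)ˣ) : Matrix (ZMod d) (ZMod d) ℂ)
        (p s) c * v (Function.update p s c) := by
  simp only [Matrix.mulVec, dotProduct]
  rw [sum_update d p s _ ?_]
  · refine Finset.sum_congr rfl fun c _ => ?_
    have hcond : ∀ t, t ≠ r → t ≠ s → p t = Function.update p s c t := fun t _ ht =>
      (Function.update_of_ne ht c p).symm
    simp only [gate2, ctrl, Matrix.of_apply, if_pos hcond, Function.update_of_ne hrs,
      Function.update_self, if_pos rfl, eq_self_iff_true, if_true]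
  · rintro q ⟨t, hts, hpt⟩
    simp only [gate2, ctrl, Matrix.of_apply]
    by_cases htr : t = r
    · rw [htr] at hpt
      by_cases h1 : ∀ t, t ≠ r → t ≠ s → p t = q t
      · rw [if_pos h1, if_neg hpt, zero_mul]
      · rw [if_neg h1, zero_mul]
    · rw [if_neg, zero_mul]
      push_neg
      exact ⟨t, htr, hts, hpt⟩

lemma step2 (U : (Matrix (ZMod d) (ZMod d) ℂ)ˣ) (r : Fin 5) (hr4 : r ≠ 4)
    (F : (Fin 5 → ZMod d) → Matrix (ZMod d) (ZMod d) ℂ) (ψ : ZMod d → ℂ)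
    (hF : ∀ p c, F (Function.update p 4 c) = F p) :
    (gate2 d (ctrl d U) r 4).mulVec (fun p => (F p).mulVec ψ (p 4)) =
      fun p => (((U ^ (p r).val : (Matrix (ZMod d) (ZMod d) ℂ)ˣ) : Matrix (ZMod d) (ZMod d) ℂ)
        * F p).mulVec ψ (p 4) := by
  funext p
  rw [gate2_ctrl_mulVec d U r 4 hr4]
  simp only [Function.update_self, hF]
  rw [← Matrix.mulVec_mulVec]
  simp [Matrix.mulVec, dotProduct]

lemma step1 (M : Matrix (ZMod d) (ZMod d) ℂ)
    (F : (Fin 5 → ZMod d) → Matrix (ZMod d) (ZMod d) ℂ) (ψ : ZMod d → ℂ)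
    (hF : ∀ p c, F (Function.update p 4 c) = F p) :
    (gate1 d M (4 : Fin 5)).mulVec (fun p => (F p).mulVec ψ (p 4)) =
      fun p => (M * F p).mulVec ψ (p 4) := by
  funext p
  rw [gate1_mulVec]
  simp only [Function.update_self, hF]
  rw [← Matrix.mulVec_mulVec]
  simp [Matrix.mulVec, dotProduct]

lemma phi_apply (q : ZMod d × ZMod d) :
    phi d q = (1 / (Real.sqrt d : ℂ)) * if q.1 = q.2 then 1 else 0 := by
  unfold phi
  simp only [Pi.smul_apply, Finset.sum_apply, smul_eq_mul]
  congr 1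
  rw [Finset.sum_eq_single q.1]
  · simp [eq_comm]
  · intro c _ hc
    simp [Ne.symm hc]
  · intro h; exact absurd (Finset.mem_univ _) h

lemma bell_apply (k : ℤ) (x y : ZMod d) :
    bell d 0 k (x, y) = (1 / (Real.sqrt d : ℂ)) * Zpow d k x y := by
  unfold bell
  rw [Xpow_zero, one_mul]
  simp only [Matrix.mulVec, dotProduct, Fintype.sum_prod_type, Matrix.kroneckerMap_apply,
    Matrix.one_apply, phi_apply]
  rw [Finset.sum_eq_single y]
  · rw [Finset.sum_eq_single y]
    · simp; ring
    · intro c _ hc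
      simp [Ne.symm hc]
    · intro h; exact absurd (Finset.mem_univ _) h
  · intro c _ hc
    apply Finset.sum_eq_zero
    intro i' _
    by_cases h : y = i'
    · subst h
      simp [hc]
    · simp [h]
  · intro h; exact absurd (Finset.mem_univ _) h

lemma XU_pow_coe (b : ℕ) :
    ((XU d ^ b : (Matrix (ZMod d) (ZMod d) ℂ)ˣ) : Matrix (ZMod d) (ZMod d) ℂ) = Xpow d b := by
  rw [Xpow, zpow_natCast]

lemma ZU_pow_coe (b : ℕ) :
    ((ZU d ^ b : (Matrix (ZMod d) (ZMod d) ℂ)ˣ) : Matrix (ZMod d) (ZMod d) ℂ) = Zpow d b := by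
  rw [Zpow, zpow_natCast]

lemma XU_inv_pow_coe (b : ℕ) :
    (((XU d)⁻¹ ^ b : (Matrix (ZMod d) (ZMod d) ℂ)ˣ) : Matrix (ZMod d) (ZMod d) ℂ) =
      Xpow d (-(b : ℤ)) := by
  rw [Xpow, inv_pow, ← zpow_natCast, ← _root_.zpow_neg]

lemma ZU_inv_pow_coe (b : ℕ) :
    (((ZU d)⁻¹ ^ b : (Matrix (ZMod d) (ZMod d) ℂ)ˣ) : Matrix (ZMod d) (ZMod d) ℂ) =
      Zpow d (-(b : ℤ)) := by
  rw [Zpow, inv_pow, ← zpow_natCast, ← _root_.zpow_neg]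

end helpers4
lemma main_calc (d : ℕ) [NeZero d] (j k : ℤ) (ψ : ZMod d → ℂ) :
    (Matrix.mulVec
        (gate2 d (ctrl d (XU d)⁻¹) (1 : Fin 5) 4 * gate2 d (ctrl d (ZU d)⁻¹) (3 : Fin 5) 4 *
          gate1 d (Xpow d j * Zpow d k) (4 : Fin 5) *
          gate2 d (ctrl d (ZU d)) (2 : Fin 5) 4 * gate2 d (ctrl d (XU d)) (0 : Fin 5) 4)
        (fun p : Fin 5 → ZMod d => phi d (p 0, p 1) * phi d (p 2, p 3) * ψ (p 4)) =
      fun p : Fin 5 → ZMod d =>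
        bell d 0 k (p 0, p 1) * bell d 0 (-j) (p 2, p 3) *
          Matrix.mulVec (Xpow d j * Zpow d k) ψ (p 4)) := by
  have hupd : ∀ (p : Fin 5 → ZMod d) (c : ZMod d) (r : Fin 5), r ≠ 4 →
      Function.update p 4 c r = p r := fun p c r hr => Function.update_of_ne hr c p
  have hv0 : (fun p : Fin 5 → ZMod d => phi d (p 0, p 1) * phi d (p 2, p 3) * ψ (p 4)) =
      fun p : Fin 5 → ZMod d =>
        (((phi d (p 0, p 1) * phi d (p 2, p 3)) •
          (1 : Matrix (ZMod d) (ZMod d) ℂ)).mulVec ψ) (p 4) := by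
    funext p
    rw [Matrix.smul_mulVec, Matrix.one_mulVec]
    simp
  have hmv : ∀ (A B C D E : Matrix (Fin 5 → ZMod d) (Fin 5 → ZMod d) ℂ)
      (w : (Fin 5 → ZMod d) → ℂ),
      (A * B * C * D * E).mulVec w =
        A.mulVec (B.mulVec (C.mulVec (D.mulVec (E.mulVec w)))) := by
    intros
    simp only [Matrix.mulVec_mulVec]
    simp only [mul_assoc]
  have s5 : (gate2 d (ctrl d (XU d)) (0 : Fin 5) 4).mulVec
      (fun p : Fin 5 → ZMod d =>
        (((phi d (p 0, p 1) * phi d (p 2, p 3)) •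
          (1 : Matrix (ZMod d) (ZMod d) ℂ)).mulVec ψ) (p 4)) =
      fun p : Fin 5 → ZMod d =>
        ((((XU d ^ (p 0).val : (Matrix (ZMod d) (ZMod d) ℂ)ˣ) : Matrix (ZMod d) (ZMod d) ℂ) *
          ((phi d (p 0, p 1) * phi d (p 2, p 3)) •
            (1 : Matrix (ZMod d) (ZMod d) ℂ))).mulVec ψ) (p 4) := by
    exact step2 d (XU d) 0 (by decide) _ ψ (fun p c => by
      simp only [hupd p c 0 (by decide), hupd p c 1 (by decide), hupd p c 2 (by decide),
        hupd p c 3 (by decide)])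
  have s4 : (gate2 d (ctrl d (ZU d)) (2 : Fin 5) 4).mulVec
      (fun p : Fin 5 → ZMod d =>
        ((((XU d ^ (p 0).val : (Matrix (ZMod d) (ZMod d) ℂ)ˣ) : Matrix (ZMod d) (ZMod d) ℂ) *
          ((phi d (p 0, p 1) * phi d (p 2, p 3)) •
            (1 : Matrix (ZMod d) (ZMod d) ℂ))).mulVec ψ) (p 4)) =
      fun p : Fin 5 → ZMod d =>
        ((((ZU d ^ (p 2).val : (Matrix (ZMod d) (ZMod d) ℂ)ˣ) : Matrix (ZMod d) (ZMod d) ℂ) *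
          (((XU d ^ (p 0).val : (Matrix (ZMod d) (ZMod d) ℂ)ˣ) : Matrix (ZMod d) (ZMod d) ℂ) *
          ((phi d (p 0, p 1) * phi d (p 2, p 3)) •
            (1 : Matrix (ZMod d) (ZMod d) ℂ)))).mulVec ψ) (p 4) := by
    exact step2 d (ZU d) 2 (by decide) _ ψ (fun p c => by
      simp only [hupd p c 0 (by decide), hupd p c 1 (by decide), hupd p c 2 (by decide),
        hupd p c 3 (by decide)])
  have s3 : (gate1 d (Xpow d j * Zpow d k) (4 : Fin 5)).mulVec
      (fun p : Fin 5 → ZMod d =>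
        ((((ZU d ^ (p 2).val : (Matrix (ZMod d) (ZMod d) ℂ)ˣ) : Matrix (ZMod d) (ZMod d) ℂ) *
          (((XU d ^ (p 0).val : (Matrix (ZMod d) (ZMod d) ℂ)ˣ) : Matrix (ZMod d) (ZMod d) ℂ) *
          ((phi d (p 0, p 1) * phi d (p 2, p 3)) •
            (1 : Matrix (ZMod d) (ZMod d) ℂ)))).mulVec ψ) (p 4)) =
      fun p : Fin 5 → ZMod d =>
        (((Xpow d j * Zpow d k) *
          (((ZU d ^ (p 2).val : (Matrix (ZMod d) (ZMod d) ℂ)ˣ) : Matrix (ZMod d) (ZMod d) ℂ) *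
          (((XU d ^ (p 0).val : (Matrix (ZMod d) (ZMod d) ℂ)ˣ) : Matrix (ZMod d) (ZMod d) ℂ) *
          ((phi d (p 0, p 1) * phi d (p 2, p 3)) •
            (1 : Matrix (ZMod d) (ZMod d) ℂ))))).mulVec ψ) (p 4) := by
    exact step1 d _ _ ψ (fun p c => by
      simp only [hupd p c 0 (by decide), hupd p c 1 (by decide), hupd p c 2 (by decide),
        hupd p c 3 (by decide)])
  have s2 : (gate2 d (ctrl d (ZU d)⁻¹) (3 : Fin 5) 4).mulVec
      (fun p : Fin 5 → ZMod d =>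
        (((Xpow d j * Zpow d k) *
          (((ZU d ^ (p 2).val : (Matrix (ZMod d) (ZMod d) ℂ)ˣ) : Matrix (ZMod d) (ZMod d) ℂ) *
          (((XU d ^ (p 0).val : (Matrix (ZMod d) (ZMod d) ℂ)ˣ) : Matrix (ZMod d) (ZMod d) ℂ) *
          ((phi d (p 0, p 1) * phi d (p 2, p 3)) •
            (1 : Matrix (ZMod d) (ZMod d) ℂ))))).mulVec ψ) (p 4)) =
      fun p : Fin 5 → ZMod d =>
        (((((ZU d)⁻¹ ^ (p 3).val : (Matrix (ZMod d) (ZMod d) ℂ)ˣ) : Matrix (ZMod d) (ZMod d) ℂ) *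
          ((Xpow d j * Zpow d k) *
          (((ZU d ^ (p 2).val : (Matrix (ZMod d) (ZMod d) ℂ)ˣ) : Matrix (ZMod d) (ZMod d) ℂ) *
          (((XU d ^ (p 0).val : (Matrix (ZMod d) (ZMod d) ℂ)ˣ) : Matrix (ZMod d) (ZMod d) ℂ) *
          ((phi d (p 0, p 1) * phi d (p 2, p 3)) •
            (1 : Matrix (ZMod d) (ZMod d) ℂ)))))).mulVec ψ) (p 4) := by
    exact step2 d (ZU d)⁻¹ 3 (by decide) _ ψ (fun p c => by
      simp only [hupd p c 0 (by decide), hupd p c 1 (by decide), hupd p c 2 (by decide),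
        hupd p c 3 (by decide)])
  have s1 : (gate2 d (ctrl d (XU d)⁻¹) (1 : Fin 5) 4).mulVec
      (fun p : Fin 5 → ZMod d =>
        (((((ZU d)⁻¹ ^ (p 3).val : (Matrix (ZMod d) (ZMod d) ℂ)ˣ) : Matrix (ZMod d) (ZMod d) ℂ) *
          ((Xpow d j * Zpow d k) *
          (((ZU d ^ (p 2).val : (Matrix (ZMod d) (ZMod d) ℂ)ˣ) : Matrix (ZMod d) (ZMod d) ℂ) *
          (((XU d ^ (p 0).val : (Matrix (ZMod d) (ZMod d) ℂ)ˣ) : Matrix (ZMod d) (ZMod d) ℂ) *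
          ((phi d (p 0, p 1) * phi d (p 2, p 3)) •
            (1 : Matrix (ZMod d) (ZMod d) ℂ)))))).mulVec ψ) (p 4)) =
      fun p : Fin 5 → ZMod d =>
        (((((XU d)⁻¹ ^ (p 1).val : (Matrix (ZMod d) (ZMod d) ℂ)ˣ) : Matrix (ZMod d) (ZMod d) ℂ) *
          ((((ZU d)⁻¹ ^ (p 3).val : (Matrix (ZMod d) (ZMod d) ℂ)ˣ) : Matrix (ZMod d) (ZMod d) ℂ) *
          ((Xpow d j * Zpow d k) *
          (((ZU d ^ (p 2).val : (Matrix (ZMod d) (ZMod d) ℂ)ˣ) : Matrix (ZMod d) (ZMod d) ℂ) *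
          (((XU d ^ (p 0).val : (Matrix (ZMod d) (ZMod d) ℂ)ˣ) : Matrix (ZMod d) (ZMod d) ℂ) *
          ((phi d (p 0, p 1) * phi d (p 2, p 3)) •
            (1 : Matrix (ZMod d) (ZMod d) ℂ))))))).mulVec ψ) (p 4) := by
    exact step2 d (XU d)⁻¹ 1 (by decide) _ ψ (fun p c => by
      simp only [hupd p c 0 (by decide), hupd p c 1 (by decide), hupd p c 2 (by decide),
        hupd p c 3 (by decide)])
  rw [hv0, hmv, s5, s4, s3, s2, s1]
  funext p
  rw [XU_pow_coe, ZU_pow_coe, XU_inv_pow_coe, ZU_inv_pow_coe]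
  simp only [mul_smul_comm, mul_one]
  by_cases h01 : p 0 = p 1
  · by_cases h23 : p 2 = p 3
    · rw [← h01, ← h23]
      rw [key d j k ((p 0).val) ((p 2).val), smul_smul, Matrix.smul_mulVec]
      rw [bell_apply, bell_apply, phi_apply, phi_apply]
      simp only [if_pos rfl, if_true, Pi.smul_apply, smul_eq_mul]
      rw [Zpow_apply, Zpow_apply, Matrix.diagonal_apply_eq, Matrix.diagonal_apply_eq]
      have hsplit : ω d ^ (k * (((p 0).val : ℤ)) - j * (((p 2).val : ℤ))) =
          ω d ^ (k * (((p 0).val : ℤ))) * ω d ^ (-j * (((p 2).val : ℤ))) := by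
        rw [← zpow_add₀ (omega_ne_zero d)]
        congr 1
        ring
      rw [hsplit]
      ring
    · simp [phi_apply, bell_apply, Zpow_apply, h23, Matrix.diagonal_apply_ne]
  · simp [phi_apply, bell_apply, Zpow_apply, h01, Matrix.diagonal_apply_ne]

/-- **Quantum Vernam cipher with a Pauli channel error.**
Registers are ordered `A₁ = 0`, `B₁ = 1`, `A₂ = 2`, `B₂ = 3`, `A = 4`.  Applying Alice's
encoding `(c-Z)_{A₂A}(c-X)_{A₁A}`, then the Pauli error `(X^j Z^k)_A`, then Bob's decoding
`(c-X⁻¹)_{B₁A}(c-Z⁻¹)_{B₂A}`, to `|φ⟩_{A₁B₁} ⊗ |φ⟩_{A₂B₂} ⊗ |ψ⟩_A` yields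
`|φ^{0,k}⟩_{A₁B₁} ⊗ |φ^{0,−j}⟩_{A₂B₂} ⊗ X^j Z^k |ψ⟩_A`.  In particular, for `j = k = 0`
Bob recovers `|ψ⟩` and both maximally entangled states remain intact. -/
theorem quantum_vernam_cipher (d : ℕ) [NeZero d] (hd : 2 ≤ d) (j k : ℤ) (ψ : ZMod d → ℂ) :
    (Matrix.mulVec
        (gate2 d (ctrl d (XU d)⁻¹) (1 : Fin 5) 4 * gate2 d (ctrl d (ZU d)⁻¹) (3 : Fin 5) 4 *
          gate1 d (Xpow d j * Zpow d k) (4 : Fin 5) *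
          gate2 d (ctrl d (ZU d)) (2 : Fin 5) 4 * gate2 d (ctrl d (XU d)) (0 : Fin 5) 4)
        (fun p : Fin 5 → ZMod d => phi d (p 0, p 1) * phi d (p 2, p 3) * ψ (p 4)) =
      fun p : Fin 5 → ZMod d =>
        bell d 0 k (p 0, p 1) * bell d 0 (-j) (p 2, p 3) *
          Matrix.mulVec (Xpow d j * Zpow d k) ψ (p 4)) ∧
    Matrix.mulVec
        (gate2 d (ctrl d (XU d)⁻¹) (1 : Fin 5) 4 * gate2 d (ctrl d (ZU d)⁻¹) (3 : Fin 5) 4 *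
          gate1 d (Xpow d 0 * Zpow d 0) (4 : Fin 5) *
          gate2 d (ctrl d (ZU d)) (2 : Fin 5) 4 * gate2 d (ctrl d (XU d)) (0 : Fin 5) 4)
        (fun p : Fin 5 → ZMod d => phi d (p 0, p 1) * phi d (p 2, p 3) * ψ (p 4)) =
      fun p : Fin 5 → ZMod d => phi d (p 0, p 1) * phi d (p 2, p 3) * ψ (p 4) := by
  constructor
  · exact main_calc d j k ψ
  · rw [main_calc d 0 0 ψ]
    funext p
    rw [neg_zero, bell_apply, bell_apply, Xpow_zero, Zpow_zero, one_mul, Matrix.one_mulVec,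
      phi_apply, phi_apply]
    simp [Matrix.one_apply]
end

section
/- Quantum hash collision probability with a δ-biased seed: let d ≥ 2 and m ≥ 1 be integers, let k = (k₁, …, k_m) with each k_i ∈ {0, …, d−1} and k ≠ 0^m, let δ ∈ (0,1), and let S = (S₁, …, S_m) be a δ-biased random variable on {0,1}^m. Then Pr[ Σ_{i=1}^m S_i k_i ≡ 0 (mod d) ] ≤ 1/2 + 2^{m/2} · δ. -/
/-- The bias of a subset `J ⊆ [m]` with respect to a distribution `S` on `{0,1}^m`:
`bias_J(S) = |Pr[∑_{i∈J} S_i ≡ 1 (mod 2)] − Pr[∑_{i∈J} S_i ≡ 0 (mod 2)]|`, with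
`bias_∅(S) = 0`. -/
noncomputable def biasJ (m : ℕ) (J : Finset (Fin m)) (S : (Fin m → Bool) → ℝ) : ℝ :=
  if J = ∅ then 0
  else
    |(∑ s ∈ Finset.univ.filter
          (fun s : Fin m → Bool => (J.filter fun i => s i = true).card % 2 = 1), S s) -
      ∑ s ∈ Finset.univ.filter
          (fun s : Fin m → Bool => (J.filter fun i => s i = true).card % 2 = 0), S s|

namespace QHashAux
open Finset

variable {m : ℕ}

noncomputable def chi (J : Finset (Fin m)) (s : Fin m → Bool) : ℝ :=
  ∏ i ∈ J, (if s i = true then (-1 : ℝ) else 1)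

lemma chi_eq_pow (J : Finset (Fin m)) (s : Fin m → Bool) :
    chi J s = (-1 : ℝ) ^ (J.filter fun i => s i = true).card := by
  rw [chi, Finset.prod_ite, Finset.prod_const, Finset.prod_const, one_pow, mul_one]

lemma chi_empty (s : Fin m → Bool) : chi (∅ : Finset (Fin m)) s = 1 := by
  simp [chi]

lemma update_involutive (i₀ : Fin m) :
    Function.Involutive (fun s : Fin m → Bool => Function.update s i₀ (!s i₀)) := by
  intro s
  funext i
  by_cases h : i = i₀
  · subst h; simp
  · simp [Function.update_of_ne h]

lemma chi_update_neg (J : Finset (Fin m)) (i₀ : Fin m) (hi : i₀ ∈ J) (s : Fin m → Bool) :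
    chi J (Function.update s i₀ (!s i₀)) = - chi J s := by
  rw [chi, chi, ← Finset.mul_prod_erase _ _ hi, ← Finset.mul_prod_erase _ _ hi]
  have h1 : ∏ i ∈ J.erase i₀,
        (if Function.update s i₀ (!s i₀) i = true then (-1:ℝ) else 1)
      = ∏ i ∈ J.erase i₀, (if s i = true then (-1:ℝ) else 1) :=
    Finset.prod_congr rfl fun i hi' => by
      rw [Function.update_of_ne (Finset.ne_of_mem_erase hi')]
  rw [h1, Function.update_self]
  cases hs : s i₀ <;> simp

lemma sum_chi_eq_zero (J : Finset (Fin m)) (hJ : J ≠ ∅) :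
    ∑ s : Fin m → Bool, chi J s = 0 := by
  obtain ⟨i₀, hi₀⟩ := Finset.nonempty_iff_ne_empty.2 hJ
  have hinv := update_involutive (m := m) i₀
  have h := Equiv.sum_comp (Function.Involutive.toPerm _ hinv) (chi J)
  have h2 : ∀ s : Fin m → Bool, chi J ((Function.Involutive.toPerm _ hinv) s) = - chi J s := fun s =>
    chi_update_neg J i₀ hi₀ s
  rw [Finset.sum_congr rfl (fun s _ => h2 s), Finset.sum_neg_distrib] at h
  linarith

lemma chi_mul (J : Finset (Fin m)) (s t : Fin m → Bool) :
    chi J s * chi J t = ∏ i ∈ J, (if s i = t i then (1:ℝ) else -1) := by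
  rw [chi, chi, ← Finset.prod_mul_distrib]
  refine Finset.prod_congr rfl fun i _ => ?_
  cases hs : s i <;> cases ht : t i <;> norm_num

lemma sum_chi_mul (s t : Fin m → Bool) :
    ∑ J : Finset (Fin m), chi J s * chi J t = if s = t then (2:ℝ)^m else 0 := by
  simp_rw [chi_mul]
  have h := Finset.prod_add (fun i : Fin m => if s i = t i then (1:ℝ) else -1)
    (fun _ : Fin m => (1:ℝ)) Finset.univ
  simp only [Finset.prod_const_one, mul_one, Finset.powerset_univ] at h
  rw [← h]
  by_cases hst : s = t
  · subst hst
    simp [Finset.prod_const]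
    norm_num
  · rw [if_neg hst]
    obtain ⟨i, hi⟩ := Function.ne_iff.1 hst
    refine Finset.prod_eq_zero (Finset.mem_univ i) ?_
    rw [if_neg (by exact fun h' => hi h')]
    norm_num

lemma parseval (f : (Fin m → Bool) → ℝ) :
    ∑ J : Finset (Fin m), (∑ s : Fin m → Bool, f s * chi J s)^2
      = 2^m * ∑ s : Fin m → Bool, (f s)^2 := by
  have expand : ∀ J : Finset (Fin m), (∑ s : Fin m → Bool, f s * chi J s)^2
      = ∑ s : Fin m → Bool, ∑ t : Fin m → Bool, f s * f t * (chi J s * chi J t) := by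
    intro J
    rw [sq, Finset.sum_mul_sum]
    exact Finset.sum_congr rfl fun s _ => Finset.sum_congr rfl fun t _ => by ring
  simp_rw [expand]
  rw [Finset.sum_comm]
  have swap2 : ∀ s : Fin m → Bool,
      ∑ J : Finset (Fin m), ∑ t : Fin m → Bool, f s * f t * (chi J s * chi J t)
      = ∑ t : Fin m → Bool, f s * f t * ∑ J : Finset (Fin m), chi J s * chi J t := by
    intro s
    rw [Finset.sum_comm]
    exact Finset.sum_congr rfl fun t _ => by rw [Finset.mul_sum]
  simp_rw [swap2, sum_chi_mul]
  rw [Finset.mul_sum]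
  refine Finset.sum_congr rfl fun s _ => ?_
  simp_rw [mul_ite, mul_zero]
  rw [Finset.sum_ite_eq Finset.univ s (fun t => f s * f t * (2:ℝ)^m)]
  simp
  ring

lemma abs_sum_mul_chi_le {δ : ℝ} (S : (Fin m → Bool) → ℝ)
    (hbias : ∀ J : Finset (Fin m), J ≠ ∅ → biasJ m J S ≤ δ)
    (J : Finset (Fin m)) (hJ : J ≠ ∅) :
    |∑ s : Fin m → Bool, S s * chi J s| ≤ δ := by
  have hb := hbias J hJ
  rw [biasJ, if_neg hJ] at hb
  have key : ∑ s : Fin m → Bool, S s * chi J s =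
      (∑ s ∈ univ.filter
          (fun s : Fin m → Bool => (J.filter fun i => s i = true).card % 2 = 0), S s)
        - ∑ s ∈ univ.filter
          (fun s : Fin m → Bool => (J.filter fun i => s i = true).card % 2 = 1), S s := by
    rw [← Finset.sum_filter_add_sum_filter_not univ
        (fun s : Fin m → Bool => (J.filter fun i => s i = true).card % 2 = 0)
        (fun s => S s * chi J s)]
    have hnot : univ.filter
          (fun s : Fin m → Bool => ¬ (J.filter fun i => s i = true).card % 2 = 0)
        = univ.filter
          (fun s : Fin m → Bool => (J.filter fun i => s i = true).card % 2 = 1) := by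
      apply Finset.filter_congr
      intro s _
      constructor <;> intro h <;> omega
    rw [hnot]
    have h0 : ∀ s ∈ univ.filter
        (fun s : Fin m → Bool => (J.filter fun i => s i = true).card % 2 = 0),
        S s * chi J s = S s := by
      intro s hs
      rw [Finset.mem_filter] at hs
      rw [chi_eq_pow, Even.neg_one_pow (Nat.even_iff.2 hs.2), mul_one]
    have h1 : ∀ s ∈ univ.filter
        (fun s : Fin m → Bool => (J.filter fun i => s i = true).card % 2 = 1),
        S s * chi J s = -S s := by
      intro s hs
      rw [Finset.mem_filter] at hs
      rw [chi_eq_pow, Odd.neg_one_pow (Nat.odd_iff.2 hs.2), mul_neg_one]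
    rw [Finset.sum_congr rfl h0, Finset.sum_congr rfl h1, Finset.sum_neg_distrib]
    ring
  rw [key, abs_sub_comm]
  exact hb

end QHashAux

open QHashAux in
/-- **Quantum hash collision probability with a `δ`-biased seed.**
Let `d ≥ 2` and `m ≥ 1`, let `k = (k₁, …, k_m)` with each `k_i ∈ {0, …, d−1}` and `k ≠ 0^m`,
let `δ ∈ (0,1)`, and let `S` be a `δ`-biased random variable on `{0,1}^m`.  Then
`Pr[∑ i, S_i k_i ≡ 0 (mod d)] ≤ 1/2 + 2^{m/2}·δ`. -/
theorem quantum_hash_collision_delta_biased (d m : ℕ) [NeZero d] (hd : 2 ≤ d) (hm : 1 ≤ m)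
    (k : Fin m → Fin d) (hk : k ≠ fun _ => 0) (δ : ℝ) (hδ0 : 0 < δ) (hδ1 : δ < 1)
    (S : (Fin m → Bool) → ℝ) (hS0 : ∀ s, 0 ≤ S s) (hS1 : ∑ s : Fin m → Bool, S s = 1)
    (hbias : ∀ J : Finset (Fin m), J ≠ ∅ → biasJ m J S ≤ δ) :
    ∑ s ∈ Finset.univ.filter
        (fun s : Fin m → Bool =>
          ((∑ i : Fin m, if s i then (k i : ℕ) else 0 : ℕ) : ZMod d) = 0), S s
      ≤ 1 / 2 + (2 : ℝ) ^ ((m : ℝ) / 2) * δ := by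
  classical
  set A : Finset (Fin m → Bool) := Finset.univ.filter
      (fun s : Fin m → Bool =>
        ((∑ i : Fin m, if s i then (k i : ℕ) else 0 : ℕ) : ZMod d) = 0) with hAdef
  obtain ⟨i₀, hi₀⟩ := Function.ne_iff.1 hk
  have hcardfun : Fintype.card (Fin m → Bool) = 2 ^ m := by simp
  -- the value k i₀ is nonzero mod d
  have hc : ((k i₀ : ℕ) : ZMod d) ≠ 0 := by
    intro h0
    rw [ZMod.natCast_eq_zero_iff] at h0
    have h1 : (k i₀ : ℕ) = 0 := Nat.eq_zero_of_dvd_of_lt h0 (k i₀).isLt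
    exact hi₀ (Fin.ext h1)
  -- cast of the sum into ZMod d
  have hT : ∀ t : Fin m → Bool,
      ((∑ i : Fin m, if t i then (k i : ℕ) else 0 : ℕ) : ZMod d)
        = ∑ i : Fin m, (if t i then ((k i : ℕ) : ZMod d) else 0) := by
    intro t
    push_cast
    exact Finset.sum_congr rfl fun i _ => by split <;> simp
  -- cardinality bound via the flipping involution
  have hcard2 : 2 * A.card ≤ 2 ^ m := by
    have hinv := update_involutive (m := m) i₀
    have hmap : ∀ s ∈ A, Function.update s i₀ (!s i₀) ∈ Aᶜ := by
      intro s hs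
      rw [hAdef, Finset.mem_filter] at hs
      rw [Finset.mem_compl, hAdef, Finset.mem_filter]
      intro hcon
      have h1 := hs.2
      have h2 := hcon.2
      rw [hT] at h1 h2
      have e1 : ∑ i : Fin m, (if s i then ((k i : ℕ) : ZMod d) else 0)
            = (if s i₀ then ((k i₀ : ℕ) : ZMod d) else 0)
              + ∑ i ∈ Finset.univ.erase i₀, (if s i then ((k i : ℕ) : ZMod d) else 0) :=
        (Finset.add_sum_erase _ _ (Finset.mem_univ i₀)).symm
      have e2 : ∑ i : Fin m,
            (if Function.update s i₀ (!s i₀) i then ((k i : ℕ) : ZMod d) else 0)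
            = (if !s i₀ then ((k i₀ : ℕ) : ZMod d) else 0)
              + ∑ i ∈ Finset.univ.erase i₀, (if s i then ((k i : ℕ) : ZMod d) else 0) := by
        rw [← Finset.add_sum_erase _
          (fun i => if Function.update s i₀ (!s i₀) i then ((k i : ℕ) : ZMod d) else 0)
          (Finset.mem_univ i₀), Function.update_self]
        congr 1
        exact Finset.sum_congr rfl fun i hi' => by
          rw [Function.update_of_ne (Finset.ne_of_mem_erase hi')]
      rw [e1] at h1
      rw [e2] at h2
      cases hsi : s i₀
      · rw [hsi] at h1 h2
        simp at h1 h2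
        exact hc (by linear_combination h2 - h1)
      · rw [hsi] at h1 h2
        simp at h1 h2
        exact hc (by linear_combination h1 - h2)
    have hinj : Set.InjOn (fun s : Fin m → Bool => Function.update s i₀ (!s i₀)) A :=
      hinv.injective.injOn
    have hle := Finset.card_le_card_of_injOn _ hmap hinj
    rw [Finset.card_compl, hcardfun] at hle
    have hA_le : A.card ≤ 2 ^ m := by
      calc A.card ≤ Fintype.card (Fin m → Bool) := Finset.card_le_univ A
        _ = 2 ^ m := hcardfun
    omega
  -- Fourier / Parseval part
  set u : ℝ := ((2:ℝ)^m)⁻¹ with hu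
  set f : (Fin m → Bool) → ℝ := fun s => S s - u with hf
  have h2m : (0:ℝ) < (2:ℝ)^m := by positivity
  have hhat0 : ∑ s : Fin m → Bool, f s * chi (∅ : Finset (Fin m)) s = 0 := by
    simp only [chi_empty, mul_one, hf]
    rw [Finset.sum_sub_distrib, hS1, Finset.sum_const, Finset.card_univ, hcardfun,
      nsmul_eq_mul, hu]
    push_cast
    field_simp
    norm_num
  have hhat : ∀ J : Finset (Fin m), J ≠ ∅ →
      |∑ s : Fin m → Bool, f s * chi J s| ≤ δ := by
    intro J hJ
    have : ∑ s : Fin m → Bool, f s * chi J s = ∑ s : Fin m → Bool, S s * chi J s := by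
      simp only [hf, sub_mul]
      rw [Finset.sum_sub_distrib, ← Finset.mul_sum, sum_chi_eq_zero J hJ, mul_zero, sub_zero]
    rw [this]
    exact abs_sum_mul_chi_le S hbias J hJ
  have hsumsq : ∑ s : Fin m → Bool, (f s)^2 ≤ δ^2 := by
    have hpar := parseval f
    have hbound : ∑ J : Finset (Fin m), (∑ s : Fin m → Bool, f s * chi J s)^2
        ≤ (2:ℝ)^m * δ^2 := by
      have : ∀ J ∈ (Finset.univ : Finset (Finset (Fin m))),
          (∑ s : Fin m → Bool, f s * chi J s)^2 ≤ δ^2 := by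
        intro J _
        by_cases hJ : J = ∅
        · subst hJ
          rw [hhat0]
          norm_num
          positivity
        · have h := hhat J hJ
          calc (∑ s : Fin m → Bool, f s * chi J s)^2
              = |∑ s : Fin m → Bool, f s * chi J s|^2 := (sq_abs _).symm
            _ ≤ δ^2 := by
                apply pow_le_pow_left₀ (abs_nonneg _) h
      calc ∑ J : Finset (Fin m), (∑ s : Fin m → Bool, f s * chi J s)^2
          ≤ ∑ _J : Finset (Fin m), δ^2 := Finset.sum_le_sum this
        _ = (2:ℝ)^m * δ^2 := by
            rw [Finset.sum_const, Finset.card_univ, Fintype.card_finset, Fintype.card_fin,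
              nsmul_eq_mul]
            push_cast
            ring
    rw [hpar] at hbound
    nlinarith [h2m]
  -- Cauchy–Schwarz
  have hAcard : (A.card : ℝ) ≤ (2:ℝ)^m := by
    have h1 : A.card ≤ 2 ^ m := by omega
    calc (A.card : ℝ) ≤ ((2^m : ℕ) : ℝ) := by exact_mod_cast h1
      _ = (2:ℝ)^m := by push_cast; ring
  have hCS : (∑ s ∈ A, f s)^2 ≤ (2:ℝ)^m * δ^2 := by
    have h1 := sq_sum_le_card_mul_sum_sq (s := A) (f := f)
    have h2 : ∑ s ∈ A, (f s)^2 ≤ δ^2 := by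
      calc ∑ s ∈ A, (f s)^2 ≤ ∑ s : Fin m → Bool, (f s)^2 :=
            Finset.sum_le_sum_of_subset_of_nonneg (Finset.subset_univ A)
              (fun s _ _ => sq_nonneg _)
        _ ≤ δ^2 := hsumsq
    calc (∑ s ∈ A, f s)^2 ≤ (A.card : ℝ) * ∑ s ∈ A, (f s)^2 := h1
      _ ≤ (2:ℝ)^m * δ^2 := by
          apply mul_le_mul hAcard h2 (Finset.sum_nonneg fun s _ => sq_nonneg _)
            (le_of_lt h2m)
  have hb2 : ((2:ℝ) ^ ((m:ℝ)/2) * δ)^2 = (2:ℝ)^m * δ^2 := by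
    rw [mul_pow]
    congr 1
    rw [sq, ← Real.rpow_add (by norm_num : (0:ℝ) < 2), add_halves,
      Real.rpow_natCast]
  have hbpos : (0:ℝ) ≤ (2:ℝ) ^ ((m:ℝ)/2) * δ := by positivity
  have hAf : ∑ s ∈ A, f s ≤ (2:ℝ) ^ ((m:ℝ)/2) * δ := by
    have habs : |∑ s ∈ A, f s| ≤ |(2:ℝ) ^ ((m:ℝ)/2) * δ| := by
      rw [← Real.sqrt_sq_eq_abs, ← Real.sqrt_sq_eq_abs]
      exact Real.sqrt_le_sqrt (by rw [hb2]; exact hCS)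
    calc ∑ s ∈ A, f s ≤ |∑ s ∈ A, f s| := le_abs_self _
      _ ≤ |(2:ℝ) ^ ((m:ℝ)/2) * δ| := habs
      _ = (2:ℝ) ^ ((m:ℝ)/2) * δ := abs_of_nonneg hbpos
  -- assemble
  have hsplitS : ∑ s ∈ A, S s = (∑ s ∈ A, f s) + (A.card : ℝ) * u := by
    simp only [hf]
    rw [Finset.sum_sub_distrib, Finset.sum_const, nsmul_eq_mul]
    ring
  have hcu : (A.card : ℝ) * u ≤ 1/2 := by
    have h1 : (2:ℝ) * (A.card : ℝ) ≤ (2:ℝ)^m := by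
      have := hcard2
      calc (2:ℝ) * (A.card : ℝ) = ((2 * A.card : ℕ) : ℝ) := by push_cast; ring
        _ ≤ ((2^m : ℕ) : ℝ) := by exact_mod_cast this
        _ = (2:ℝ)^m := by push_cast; ring
    rw [hu]
    have hinv2 : (0:ℝ) < ((2:ℝ)^m)⁻¹ := by positivity
    calc (A.card : ℝ) * ((2:ℝ)^m)⁻¹ ≤ ((2:ℝ)^m / 2) * ((2:ℝ)^m)⁻¹ := by
          apply mul_le_mul_of_nonneg_right (by linarith) (le_of_lt hinv2)
      _ = 1/2 := by field_simp
  rw [hsplitS] at *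
  linarith
end
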